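/- Let (X,d) be a metric space. Every TB-regular function from (X,d) to any other metric space (Y,ρ) is continuous if and only if (X,d) is discrete, i.e., every point of X is isolated. -/

import Mathlib

universe u v

/-- `f` is TB-regular if it maps totally bounded sets to totally bounded sets. -/
def TBRegular {X : Type u} {Y : Type v} [MetricSpace X] [MetricSpace Y] (f : X → Y) : Prop :=
  ∀ A : Set X, TotallyBounded A → TotallyBounded (f '' A)

theorem tbRegular_continuous_iff_discrete {X : Type u} [MetricSpace X] :
    (∀ (Y : Type v) [MetricSpace Y] (f : X → Y), TBRegular f → Continuous f) ↔
      ∀ x : X, ∃ ε > 0, ∀ y : X, dist x y < ε → y = x := by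
  constructor
  · intro h x
    by_contra hx
    push_neg at hx
    classical
    set f : X → ULift.{v} ℝ := fun z => ⟨if z = x then 1 else 0⟩ with hf
    have hreg : TBRegular f := by
      intro A _
      have hsub : f '' A ⊆ {(⟨1⟩ : ULift ℝ), ⟨0⟩} := by
        rintro _ ⟨a, -, rfl⟩
        by_cases ha : a = x <;> simp [hf, ha]
      exact TotallyBounded.subset hsub ((Set.toFinite _).totallyBounded)
    have hcont := h _ f hreg
    have hc := (Metric.continuous_iff.mp hcont) x (1/2) (by norm_num)
    obtain ⟨δ, hδ, hδ'⟩ := hc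
    obtain ⟨y, hy, hyx⟩ := hx δ hδ
    have := hδ' y (by rwa [dist_comm])
    have hd : dist (f y) (f x) = 1 := by
      simp [hf, hyx, ULift.dist_eq, Real.dist_eq]
    rw [hd] at this
    norm_num at this
  · intro h Y _ f _
    have : DiscreteTopology X := by
      rw [discreteTopology_iff_isOpen_singleton]
      intro x
      obtain ⟨ε, hε, hx⟩ := h x
      rw [Metric.isOpen_iff]
      rintro y rfl
      exact ⟨ε, hε, fun z hz => hx z (by rwa [dist_comm])⟩
    exact continuous_of_discreteTopology
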